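/- arXiv:2010.15764 — 5 statements merged into one kernel-verified Lean document; each statement's English description precedes it below -/
import Mathlib

section
/- Let Σ be a symmetric positive definite d×d real matrix, b ∈ ℝ^d, σ > 0, and let Q be a d×k real matrix with linearly independent columns (k ≤ d). Then the minimum of (1 - ζᵀQᵀb)²·σ² + ζᵀ(QᵀΣQ)ζ over ζ ∈ ℝ^k equals σ² / (1 + σ²·bᵀ·Q·(QᵀΣQ)⁻¹·Qᵀ·b). -/
open Matrix

lemma key_quad {k : ℕ} (M : Matrix (Fin k) (Fin k) ℝ) (hM : M.PosDef) (c : Fin k → ℝ)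
    (σ : ℝ) (hσ : 0 < σ) :
    IsLeast
      (Set.range (fun ζ : Fin k → ℝ =>
        (1 - ζ ⬝ᵥ c) ^ 2 * σ ^ 2 + ζ ⬝ᵥ M.mulVec ζ))
      (σ ^ 2 / (1 + σ ^ 2 * (c ⬝ᵥ M⁻¹.mulVec c))) := by
  have hMs : Mᵀ = M := by
    have := hM.isHermitian
    rwa [Matrix.IsHermitian, conjTranspose_eq_transpose_of_trivial] at this
  set x : Fin k → ℝ := M⁻¹.mulVec c with hx
  have hMx : M.mulVec x = c := by
    rw [hx, Matrix.mulVec_mulVec, Matrix.mul_nonsing_inv M hM.det_pos.ne'.isUnit,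
      Matrix.one_mulVec]
  set u : ℝ := c ⬝ᵥ x with hudef
  have hu : 0 ≤ u := by
    have := (hM.inv).posSemidef.dotProduct_mulVec_nonneg c
    simpa using this
  have hD : 0 < 1 + σ ^ 2 * u := by positivity
  have hsym : ∀ v w : Fin k → ℝ, v ⬝ᵥ M.mulVec w = w ⬝ᵥ M.mulVec v := by
    intro v w
    rw [Matrix.dotProduct_mulVec, ← Matrix.mulVec_transpose, hMs, dotProduct_comm]
  have hxMx : x ⬝ᵥ M.mulVec x = u := by rw [hMx, dotProduct_comm]
  constructor
  · refine ⟨(σ ^ 2 / (1 + σ ^ 2 * u)) • x, ?_⟩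
    have h1 : ((σ ^ 2 / (1 + σ ^ 2 * u)) • x) ⬝ᵥ c = σ ^ 2 / (1 + σ ^ 2 * u) * u := by
      rw [smul_dotProduct, dotProduct_comm]
      simp [hudef, smul_eq_mul]
    have h2 : ((σ ^ 2 / (1 + σ ^ 2 * u)) • x) ⬝ᵥ
        M.mulVec ((σ ^ 2 / (1 + σ ^ 2 * u)) • x)
        = (σ ^ 2 / (1 + σ ^ 2 * u)) ^ 2 * u := by
      rw [Matrix.mulVec_smul, smul_dotProduct, dotProduct_smul, hxMx]
      simp only [smul_eq_mul]
      ring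
    simp only [h1, h2]
    field_simp
    ring
  · rintro y ⟨ζ, rfl⟩
    set a : ℝ := ζ ⬝ᵥ c with hadef
    set q : ℝ := ζ ⬝ᵥ M.mulVec ζ with hqdef
    have hq : 0 ≤ q := by
      have := hM.posSemidef.dotProduct_mulVec_nonneg ζ
      simpa using this
    have hζx : ζ ⬝ᵥ M.mulVec x = a := by rw [hMx]
    have hcs : a ^ 2 ≤ u * q := by
      have hquad : ∀ t : ℝ, 0 ≤ u * (t * t) + (-(2 * a)) * t + q := by
        intro t
        have h0 : 0 ≤ (ζ - t • x) ⬝ᵥ M.mulVec (ζ - t • x) := by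
          have := hM.posSemidef.dotProduct_mulVec_nonneg (ζ - t • x)
          simpa using this
        have hexp : (ζ - t • x) ⬝ᵥ M.mulVec (ζ - t • x)
            = u * (t * t) + (-(2 * a)) * t + q := by
          simp only [sub_dotProduct, Matrix.mulVec_sub, dotProduct_sub,
            Matrix.mulVec_smul, smul_dotProduct, dotProduct_smul, smul_eq_mul,
            hsym x ζ, hζx, hxMx, ← hqdef]
          ring
        linarith [hexp ▸ h0]
      have := discrim_le_zero hquad
      rw [discrim] at this
      nlinarith [this]
    rw [div_le_iff₀ hD]
    show σ ^ 2 ≤ ((1 - a) ^ 2 * σ ^ 2 + q) * (1 + σ ^ 2 * u)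
    rcases eq_or_lt_of_le hu with h0 | hpos
    · have ha : a = 0 := by nlinarith [sq_nonneg a]
      rw [ha, ← h0]
      nlinarith [hq]
    · have hkey : (((1 - a) ^ 2 * σ ^ 2 + q) * (1 + σ ^ 2 * u) - σ ^ 2) * u
          = (σ ^ 2 * u * (1 - a) - a) ^ 2 + σ ^ 2 * u * (u * q - a ^ 2)
            + (u * q - a ^ 2) := by ring
      nlinarith [hkey, sq_nonneg (σ ^ 2 * u * (1 - a) - a),
        mul_nonneg (mul_nonneg (sq_nonneg σ) hu) (sub_nonneg.mpr hcs),
        sub_nonneg.mpr hcs, hpos]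

/-- Value of the reparametrized DIP quadratic program. -/
theorem stmt2 {d k : ℕ} (hk : k ≤ d) (S : Matrix (Fin d) (Fin d) ℝ) (hS : S.PosDef)
    (hsymm : S.IsSymm) (b : Fin d → ℝ) (σ : ℝ) (hσ : 0 < σ)
    (Q : Matrix (Fin d) (Fin k) ℝ) (hQ : LinearIndependent ℝ Qᵀ) :
    IsLeast
      (Set.range (fun ζ : Fin k → ℝ =>
        (1 - ζ ⬝ᵥ Qᵀ.mulVec b) ^ 2 * σ ^ 2 + ζ ⬝ᵥ (Qᵀ * S * Q).mulVec ζ))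
      (σ ^ 2 /
        (1 + σ ^ 2 * (b ⬝ᵥ Q.mulVec ((Qᵀ * S * Q)⁻¹.mulVec (Qᵀ.mulVec b))))) := by
  have hQinj : Function.Injective Q.mulVec := Matrix.mulVec_injective_iff.mpr hQ
  have hMpd : (Qᵀ * S * Q).PosDef := by
    refine posDef_iff_dotProduct_mulVec.mpr ⟨?_, ?_⟩
    · rw [Matrix.IsHermitian, conjTranspose_eq_transpose_of_trivial]
      rw [Matrix.transpose_mul, Matrix.transpose_mul, Matrix.transpose_transpose,
        hsymm.eq, Matrix.mul_assoc]
    · intro v hv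
      have hQv : Q.mulVec v ≠ 0 := by
        intro h
        exact hv (hQinj (by simpa using h))
      have := hS.dotProduct_mulVec_pos hQv
      have heq : v ⬝ᵥ (Qᵀ * S * Q).mulVec v
          = (Q.mulVec v) ⬝ᵥ S.mulVec (Q.mulVec v) := by
        rw [← Matrix.mulVec_mulVec, ← Matrix.mulVec_mulVec, Matrix.dotProduct_mulVec,
          ← Matrix.mulVec_transpose, Matrix.transpose_transpose]
      simp only [star_trivial] at this ⊢
      rw [heq]
      simpa using this
  have hval : b ⬝ᵥ Q.mulVec ((Qᵀ * S * Q)⁻¹.mulVec (Qᵀ.mulVec b))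
      = (Qᵀ.mulVec b) ⬝ᵥ (Qᵀ * S * Q)⁻¹.mulVec (Qᵀ.mulVec b) := by
    rw [Matrix.dotProduct_mulVec, ← Matrix.mulVec_transpose]
  rw [hval]
  exact key_quad (Qᵀ * S * Q) hMpd (Qᵀ.mulVec b) σ hσ
end

section
/- Let Σ be a symmetric positive definite d×d matrix, b ∈ ℝ^d, σ > 0, u ∈ ℝ^d a unit vector, and Q a d×(d−1) matrix whose columns together with u form an orthonormal basis of ℝ^d. Then the minimum of (1 - γᵀb)²·σ² + γᵀΣγ subject to γᵀu = 0 equals σ² / (1 + σ²·bᵀΣ^{-1/2}·G·Σ^{-1/2}·b), where G = Σ^{1/2}Q(QᵀΣQ)⁻¹QᵀΣ^{1/2}. -/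
open Matrix

section

open scoped ComplexOrder

/-- The positive semidefinite square root of a positive semidefinite matrix
(the definition `Matrix.PosSemidef.sqrt` of the older Mathlib, removed since). -/
noncomputable def Matrix.PosSemidef.sqrt {n 𝕜 : Type*} [Fintype n] [RCLike 𝕜] [DecidableEq n]
    {A : Matrix n n 𝕜} (hA : A.PosSemidef) : Matrix n n 𝕜 :=
  hA.1.eigenvectorUnitary.1 * diagonal ((↑) ∘ (√·) ∘ hA.1.eigenvalues) *
  (star hA.1.eigenvectorUnitary : Matrix n n 𝕜)

end

/-- Value of the DIP constrained quadratic program: minimum of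
`(1 - γᵀb)²σ² + γᵀΣγ` subject to `γᵀu = 0`. -/
theorem stmt4 {d : ℕ} (hd : 1 ≤ d) (S : Matrix (Fin d) (Fin d) ℝ) (hS : S.PosDef)
    (hsymm : S.IsSymm) (b u : Fin d → ℝ) (σ : ℝ) (hσ : 0 < σ)
    (hu : u ⬝ᵥ u = 1)
    (Q : Matrix (Fin d) (Fin (d - 1)) ℝ)
    (hQ : Qᵀ * Q = 1) (hQu : Qᵀ.mulVec u = 0) :
    IsLeast
      {r : ℝ | ∃ γ : Fin d → ℝ, γ ⬝ᵥ u = 0 ∧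
        r = (1 - γ ⬝ᵥ b) ^ 2 * σ ^ 2 + γ ⬝ᵥ S.mulVec γ}
      (σ ^ 2 / (1 + σ ^ 2 *
        (b ⬝ᵥ ((hS.posSemidef.sqrt)⁻¹ *
            (hS.posSemidef.sqrt * Q * (Qᵀ * S * Q)⁻¹ * Qᵀ * hS.posSemidef.sqrt) *
            (hS.posSemidef.sqrt)⁻¹).mulVec b))) := by
  set R := hS.posSemidef.sqrt with hRdef
  set A := Qᵀ * S * Q with hAdef
  -- basic dot product transfer lemma
  have hdot : ∀ (ζ : Fin (d-1) → ℝ) (v : Fin d → ℝ), (Q *ᵥ ζ) ⬝ᵥ v = ζ ⬝ᵥ (Qᵀ *ᵥ v) := by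
    intro ζ v
    rw [dotProduct_comm, dotProduct_mulVec, ← mulVec_transpose, dotProduct_comm]
  have hquad : ∀ (ζ η : Fin (d-1) → ℝ),
      (Q *ᵥ ζ) ⬝ᵥ (S *ᵥ (Q *ᵥ η)) = ζ ⬝ᵥ (A *ᵥ η) := by
    intro ζ η
    rw [hdot, Matrix.mulVec_mulVec, Matrix.mulVec_mulVec, hAdef]
  -- A is positive definite
  have hAsymm : Aᵀ = A := by
    rw [hAdef, Matrix.transpose_mul, Matrix.transpose_mul, Matrix.transpose_transpose,
      hsymm.eq, Matrix.mul_assoc]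
  have hApos : A.PosDef := by
    refine Matrix.PosDef.of_dotProduct_mulVec_pos ?_ ?_
    · show Aᴴ = A
      rw [conjTranspose_eq_transpose_of_trivial, hAsymm]
    · intro x hx
      have hQx : Q *ᵥ x ≠ 0 := by
        intro h
        apply hx
        have := congrArg (fun v => Qᵀ *ᵥ v) h
        simpa [Matrix.mulVec_mulVec, hQ] using this
      have := hS.dotProduct_mulVec_pos hQx
      simp only [star_trivial] at this ⊢
      rw [← hquad x x]
      exact this
  have hAunit : IsUnit A.det := (Matrix.isUnit_iff_isUnit_det A).mp hApos.isUnit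
  set c := Qᵀ *ᵥ b with hcdef
  set w := A⁻¹ *ᵥ c with hwdef
  have hAw : A *ᵥ w = c := by
    rw [hwdef, Matrix.mulVec_mulVec, Matrix.mul_nonsing_inv A hAunit, Matrix.one_mulVec]
  set t := c ⬝ᵥ w with htdef
  have ht0 : 0 ≤ t := by
    have := hApos.posSemidef.dotProduct_mulVec_nonneg w
    simp only [star_trivial] at this
    rw [htdef, ← hAw, dotProduct_comm]
    exact this
  have hden : (0:ℝ) < 1 + σ ^ 2 * t := by positivity
  -- w ⬝ᵥ A *ᵥ ζ = ζ ⬝ᵥ c for all ζ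
  have hwAζ : ∀ ζ : Fin (d-1) → ℝ, w ⬝ᵥ (A *ᵥ ζ) = ζ ⬝ᵥ c := by
    intro ζ
    rw [dotProduct_mulVec, ← mulVec_transpose, hAsymm, hAw, dotProduct_comm]
  -- invertibility of R
  have hRR : R * R = S := by
    have hsp := hS.posSemidef.1.spectral_theorem
    rw [Unitary.conjStarAlgAut_apply] at hsp
    rw [hRdef, Matrix.PosSemidef.sqrt]
    conv_rhs => rw [hsp]
    have key : ∀ (U D : Matrix (Fin d) (Fin d) ℝ), star U * U = 1 →
        U * D * star U * (U * D * star U) = U * (D * D) * star U := by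
      intro U D h
      calc _ = U * (D * (star U * U) * D) * star U := by simp only [Matrix.mul_assoc]
        _ = _ := by rw [h, Matrix.mul_one]
    rw [key _ _ (Unitary.coe_star_mul_self _), diagonal_mul_diagonal]
    congr 3
    ext i
    simp [Real.mul_self_sqrt (hS.posSemidef.eigenvalues_nonneg i)]
  have hRunit : IsUnit R.det := by
    refine isUnit_iff_ne_zero.mpr fun h => ?_
    have h2 : R.det * R.det = S.det := by rw [← Matrix.det_mul, hRR]
    rw [h, mul_zero] at h2
    exact hS.det_pos.ne' h2.symm
  have hRinv : R⁻¹ * R = 1 := Matrix.nonsing_inv_mul R hRunit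
  have hRinv' : R * R⁻¹ = 1 := Matrix.mul_nonsing_inv R hRunit
  have hmat : R⁻¹ * (R * Q * A⁻¹ * Qᵀ * R) * R⁻¹ = Q * A⁻¹ * Qᵀ := by
    calc R⁻¹ * (R * Q * A⁻¹ * Qᵀ * R) * R⁻¹
        = R⁻¹ * R * Q * A⁻¹ * Qᵀ * (R * R⁻¹) := by
          simp only [Matrix.mul_assoc]
      _ = Q * A⁻¹ * Qᵀ := by
          rw [hRinv, hRinv', Matrix.one_mul, Matrix.mul_one]
  have hb : b ⬝ᵥ ((Q * A⁻¹ * Qᵀ) *ᵥ b) = t := by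
    rw [← Matrix.mulVec_mulVec, ← Matrix.mulVec_mulVec, dotProduct_comm, hdot, htdef,
      ← hcdef, ← hwdef, dotProduct_comm]
  have hgoal : (b ⬝ᵥ (R⁻¹ * (R * Q * A⁻¹ * Qᵀ * R) * R⁻¹).mulVec b) = t := by
    rw [hmat]; exact hb
  rw [hgoal]
  constructor
  · -- membership: the minimizer
    refine ⟨Q *ᵥ ((σ ^ 2 / (1 + σ ^ 2 * t)) • w), ?_, ?_⟩
    · rw [hdot, hQu, dotProduct_zero]
    · set k := σ ^ 2 / (1 + σ ^ 2 * t) with hk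
      have h1 : (Q *ᵥ (k • w)) ⬝ᵥ b = k * t := by
        rw [hdot, ← hcdef, smul_dotProduct, smul_eq_mul, dotProduct_comm, ← htdef]
      have h2 : (Q *ᵥ (k • w)) ⬝ᵥ (S *ᵥ (Q *ᵥ (k • w))) = k * (k * t) := by
        rw [hquad, Matrix.mulVec_smul, hAw, smul_dotProduct, dotProduct_smul,
          smul_eq_mul, smul_eq_mul, dotProduct_comm, ← htdef]
      rw [h1, h2, hk]
      field_simp
      ring
  · -- lower bound
    rintro r ⟨γ, hγu, rfl⟩
    set k := σ ^ 2 / (1 + σ ^ 2 * t) with hk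
    set ζ := Qᵀ *ᵥ γ with hζdef
    -- γ = Q ζ
    have hQQ : Q * Qᵀ + replicateCol (Fin 1) u * replicateRow (Fin 1) u = 1 := by
      have e : Fin d ≃ Fin (d-1) ⊕ Fin 1 :=
        (finCongr (by omega : d = (d-1)+1)).trans finSumFinEquiv.symm
      have h2 : Qᵀ * replicateCol (Fin 1) u = 0 := by rw [← replicateCol_mulVec, hQu, replicateCol_zero]
      have h3 : replicateRow (Fin 1) u * Q = 0 := by
        rw [← replicateRow_vecMul, ← mulVec_transpose, hQu, replicateRow_zero]
      have h4 : replicateRow (Fin 1) u * replicateCol (Fin 1) u = 1 := by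
        rw [replicateRow_mul_replicateCol, hu]
        ext i j
        simp [Matrix.one_apply, Subsingleton.elim i j]
      have h1 : fromRows Qᵀ (replicateRow (Fin 1) u) * fromCols Q (replicateCol (Fin 1) u) = 1 := by
        rw [fromRows_mul_fromCols, hQ, h2, h3, h4, fromBlocks_one]
      have hBB := (fromCols_mul_fromRows_eq_one_comm e Q (replicateCol (Fin 1) u) Qᵀ
        (replicateRow (Fin 1) u)).mpr h1
      rw [fromCols_mul_fromRows] at hBB
      exact hBB
    have huγ : u ⬝ᵥ γ = 0 := by rw [dotProduct_comm]; exact hγu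
    have hzero : (replicateCol (Fin 1) u * replicateRow (Fin 1) u) *ᵥ γ = 0 := by
      ext i
      simp only [Matrix.mulVec, dotProduct, Matrix.mul_apply, Fin.sum_univ_one,
        replicateCol_apply, replicateRow_apply, Pi.zero_apply, mul_assoc, ← Finset.mul_sum]
      rw [show ∑ j, u j * γ j = u ⬝ᵥ γ from rfl, huγ, mul_zero]
    have hγ : Q *ᵥ ζ = γ := by
      rw [hζdef, Matrix.mulVec_mulVec,
        show Q * Qᵀ = 1 - replicateCol (Fin 1) u * replicateRow (Fin 1) u from by
          rw [eq_sub_iff_add_eq]; exact hQQ,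
        Matrix.sub_mulVec, hzero, Matrix.one_mulVec, sub_zero]
    set s := ζ ⬝ᵥ c with hsdef
    set q := ζ ⬝ᵥ (A *ᵥ ζ) with hqdef
    have hγb : γ ⬝ᵥ b = s := by rw [← hγ, hdot, ← hcdef]
    have hγS : γ ⬝ᵥ (S *ᵥ γ) = q := by rw [← hγ, hquad]
    have e2 : (ζ - k • w) ⬝ᵥ c = s - k * t := by
      rw [sub_dotProduct, smul_dotProduct, smul_eq_mul, dotProduct_comm w c, ← htdef, ← hsdef]
    have e1 : (ζ - k • w) ⬝ᵥ (A *ᵥ (ζ - k • w)) = q - 2*k*s + k^2*t := by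
      simp only [Matrix.mulVec_sub, Matrix.mulVec_smul, hAw, sub_dotProduct,
        dotProduct_sub, smul_dotProduct, dotProduct_smul, smul_eq_mul]
      rw [hwAζ ζ, dotProduct_comm w c, ← hsdef, ← hqdef, ← htdef]
      ring
    have hnn1 : 0 ≤ (ζ - k • w) ⬝ᵥ (A *ᵥ (ζ - k • w)) := by
      have := hApos.posSemidef.dotProduct_mulVec_nonneg (ζ - k • w)
      simpa only [star_trivial] using this
    have hnn2 : 0 ≤ σ ^ 2 * ((ζ - k • w) ⬝ᵥ c) ^ 2 := by positivity
    have hid : (1 - γ ⬝ᵥ b) ^ 2 * σ ^ 2 + γ ⬝ᵥ S.mulVec γ - k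
        = (ζ - k • w) ⬝ᵥ (A *ᵥ (ζ - k • w)) + σ ^ 2 * ((ζ - k • w) ⬝ᵥ c) ^ 2 := by
      rw [hγb, hγS, e1, e2, hk]
      field_simp
      ring
    have : 0 ≤ (1 - γ ⬝ᵥ b) ^ 2 * σ ^ 2 + γ ⬝ᵥ S.mulVec γ - k := by
      rw [hid]; exact add_nonneg hnn1 hnn2
    linarith
end

section
/- Let Σ be a symmetric positive definite d×d matrix, b ∈ ℝ^d, σ > 0, and a₁, ã ∈ ℝ^d fixed intervention vectors. Consider real random variables Y = ε_Y and random vectors X = b·ε_Y + a + ε_X, where ε_Y has mean 0 and variance σ², ε_X has mean 0 and covariance Σ, ε_Y and ε_X are uncorrelated, and a equals a₁ in the source and ã in the target. Then for every β ∈ ℝ^d and β₀ ∈ ℝ: E[(Y − βᵀX − β₀)²] in the source equals (1 − βᵀb)²σ² + (βᵀa₁ + β₀)² + βᵀΣβ, and in the target equals (1 − βᵀb)²σ² + (βᵀã + β₀)² + βᵀΣβ. Consequently, if βᵀ(a₁ − ã) = 0 then the source and target risks of (β, β₀) are equal. -/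
open Matrix MeasureTheory

lemma key13 {Ω : Type*} [MeasurableSpace Ω] (μ : Measure Ω) [IsProbabilityMeasure μ]
    {d : ℕ} (S : Matrix (Fin d) (Fin d) ℝ)
    (b : Fin d → ℝ) (σ : ℝ)
    (εY : Ω → ℝ) (εX : Fin d → Ω → ℝ)
    (hY1 : Integrable εY μ) (hY2 : Integrable (fun ω => εY ω ^ 2) μ)
    (hX1 : ∀ i, Integrable (εX i) μ)
    (hX2 : ∀ i j, Integrable (fun ω => εX i ω * εX j ω) μ)
    (hYX : ∀ i, Integrable (fun ω => εY ω * εX i ω) μ)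
    (hmY : ∫ ω, εY ω ∂μ = 0) (hvY : ∫ ω, εY ω ^ 2 ∂μ = σ ^ 2)
    (hmX : ∀ i, ∫ ω, εX i ω ∂μ = 0)
    (hcX : ∀ i j, ∫ ω, εX i ω * εX j ω ∂μ = S i j)
    (hYXc : ∀ i, ∫ ω, εY ω * εX i ω ∂μ = 0)
    (β : Fin d → ℝ) (β0 : ℝ) (a : Fin d → ℝ) :
    ∫ ω, (εY ω - β ⬝ᵥ (fun i => b i * εY ω + a i + εX i ω) - β0) ^ 2 ∂μ
        = (1 - β ⬝ᵥ b) ^ 2 * σ ^ 2 + (β ⬝ᵥ a + β0) ^ 2 + β ⬝ᵥ S.mulVec β := by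
  set c : ℝ := 1 - β ⬝ᵥ b with hc
  set k : ℝ := β ⬝ᵥ a + β0 with hk
  set Z : Ω → ℝ := fun ω => ∑ i, β i * εX i ω with hZ
  have hpt : ∀ ω, εY ω - β ⬝ᵥ (fun i => b i * εY ω + a i + εX i ω) - β0
      = c * εY ω - k - Z ω := by
    intro ω
    have h1 : β ⬝ᵥ (fun i => b i * εY ω + a i + εX i ω)
        = (β ⬝ᵥ b) * εY ω + β ⬝ᵥ a + Z ω := by
      simp only [dotProduct, hZ, mul_add, Finset.sum_add_distrib, Finset.sum_mul]
      congr 1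
      congr 1
      exact Finset.sum_congr rfl fun i _ => (mul_assoc _ _ _).symm
    rw [h1, hc, hk]; ring
  have hZint : Integrable Z μ := by
    exact integrable_finset_sum _ fun i _ => (hX1 i).const_mul (β i)
  have hZZpt : ∀ ω, Z ω * Z ω = ∑ i, ∑ j, (β i * β j) * (εX i ω * εX j ω) := by
    intro ω
    rw [hZ]
    rw [Finset.sum_mul_sum]
    exact Finset.sum_congr rfl fun i _ => Finset.sum_congr rfl fun j _ => by ring
  have hZZint : Integrable (fun ω => Z ω * Z ω) μ := by
    have : Integrable (fun ω => ∑ i, ∑ j, (β i * β j) * (εX i ω * εX j ω)) μ :=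
      integrable_finset_sum _ fun i _ => integrable_finset_sum _ fun j _ =>
        (hX2 i j).const_mul _
    exact this.congr (by filter_upwards with ω using (hZZpt ω).symm)
  have hYZpt : ∀ ω, εY ω * Z ω = ∑ i, β i * (εY ω * εX i ω) := by
    intro ω; rw [hZ, Finset.mul_sum]; exact Finset.sum_congr rfl fun i _ => by ring
  have hYZint : Integrable (fun ω => εY ω * Z ω) μ := by
    have : Integrable (fun ω => ∑ i, β i * (εY ω * εX i ω)) μ :=
      integrable_finset_sum _ fun i _ => (hYX i).const_mul _
    exact this.congr (by filter_upwards with ω using (hYZpt ω).symm)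
  have hZval : ∫ ω, Z ω ∂μ = 0 := by
    rw [hZ]
    rw [integral_finset_sum _ fun i _ => (hX1 i).const_mul (β i)]
    simp [integral_const_mul, hmX]
  have hYZval : ∫ ω, εY ω * Z ω ∂μ = 0 := by
    rw [integral_congr_ae (by filter_upwards with ω using hYZpt ω)]
    rw [integral_finset_sum _ fun i _ => (hYX i).const_mul _]
    simp [integral_const_mul, hYXc]
  have hZZval : ∫ ω, Z ω * Z ω ∂μ = β ⬝ᵥ S.mulVec β := by
    rw [integral_congr_ae (by filter_upwards with ω using hZZpt ω)]
    rw [integral_finset_sum _ fun i _ => integrable_finset_sum _ fun j _ =>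
      (hX2 i j).const_mul _]
    simp only [integral_finset_sum _ fun j _ => (hX2 _ j).const_mul _,
      integral_const_mul, hcX]
    simp only [dotProduct, mulVec, dotProduct, Finset.mul_sum]
    exact Finset.sum_congr rfl fun i _ => Finset.sum_congr rfl fun j _ => by ring
  -- decompose the square
  have hsq : ∀ ω, (εY ω - β ⬝ᵥ (fun i => b i * εY ω + a i + εX i ω) - β0) ^ 2
      = c ^ 2 * εY ω ^ 2 + ((-2 * c * k) * εY ω + ((-2 * c) * (εY ω * Z ω)
        + ((2 * k) * Z ω + (Z ω * Z ω + k ^ 2)))) := by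
    intro ω; rw [hpt ω]; ring
  rw [integral_congr_ae (by filter_upwards with ω using hsq ω)]
  have i1 : Integrable (fun ω => c ^ 2 * εY ω ^ 2) μ := hY2.const_mul _
  have i2 : Integrable (fun ω => (-2 * c * k) * εY ω) μ := hY1.const_mul _
  have i3 : Integrable (fun ω => (-2 * c) * (εY ω * Z ω)) μ := hYZint.const_mul _
  have i4 : Integrable (fun ω => (2 * k) * Z ω) μ := hZint.const_mul _
  have i5 : Integrable (fun ω => Z ω * Z ω + k ^ 2) μ := hZZint.add (integrable_const _)
  have i45 : Integrable (fun ω => (2 * k) * Z ω + (Z ω * Z ω + k ^ 2)) μ := i4.add i5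
  have i345 : Integrable (fun ω => (-2 * c) * (εY ω * Z ω)
      + ((2 * k) * Z ω + (Z ω * Z ω + k ^ 2))) μ := i3.add i45
  have i2345 : Integrable (fun ω => (-2 * c * k) * εY ω + ((-2 * c) * (εY ω * Z ω)
      + ((2 * k) * Z ω + (Z ω * Z ω + k ^ 2)))) μ := i2.add i345
  rw [integral_add i1 i2345, integral_add i2 i345, integral_add i3 i45,
      integral_add i4 i5, integral_add hZZint (integrable_const _)]
  simp only [integral_const_mul, hvY, hmY, hYZval, hZval, hZZval, integral_const,
    measure_univ, probReal_univ, ENNReal.toReal_one, smul_eq_mul, one_mul]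
  ring

/-- Source and target population risks in the reduced anticausal model
`Y = ε_Y`, `X = bY + a + ε_X`, and their equality under the DIP matching
constraint `βᵀ(a₁ − ã) = 0`. -/
theorem stmt13 {Ω : Type*} [MeasurableSpace Ω] (μ : Measure Ω) [IsProbabilityMeasure μ]
    {d : ℕ} (S : Matrix (Fin d) (Fin d) ℝ) (hS : S.PosDef)
    (b a1 atil : Fin d → ℝ) (σ : ℝ) (hσ : 0 < σ)
    (εY : Ω → ℝ) (εX : Fin d → Ω → ℝ)
    (hY1 : Integrable εY μ) (hY2 : Integrable (fun ω => εY ω ^ 2) μ)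
    (hX1 : ∀ i, Integrable (εX i) μ)
    (hX2 : ∀ i j, Integrable (fun ω => εX i ω * εX j ω) μ)
    (hYX : ∀ i, Integrable (fun ω => εY ω * εX i ω) μ)
    (hmY : ∫ ω, εY ω ∂μ = 0) (hvY : ∫ ω, εY ω ^ 2 ∂μ = σ ^ 2)
    (hmX : ∀ i, ∫ ω, εX i ω ∂μ = 0)
    (hcX : ∀ i j, ∫ ω, εX i ω * εX j ω ∂μ = S i j)
    (hYXc : ∀ i, ∫ ω, εY ω * εX i ω ∂μ = 0)
    (β : Fin d → ℝ) (β0 : ℝ) :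
    (∫ ω, (εY ω - β ⬝ᵥ (fun i => b i * εY ω + a1 i + εX i ω) - β0) ^ 2 ∂μ
        = (1 - β ⬝ᵥ b) ^ 2 * σ ^ 2 + (β ⬝ᵥ a1 + β0) ^ 2 + β ⬝ᵥ S.mulVec β) ∧
    (∫ ω, (εY ω - β ⬝ᵥ (fun i => b i * εY ω + atil i + εX i ω) - β0) ^ 2 ∂μ
        = (1 - β ⬝ᵥ b) ^ 2 * σ ^ 2 + (β ⬝ᵥ atil + β0) ^ 2 + β ⬝ᵥ S.mulVec β) ∧
    (β ⬝ᵥ (a1 - atil) = 0 →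
      ∫ ω, (εY ω - β ⬝ᵥ (fun i => b i * εY ω + a1 i + εX i ω) - β0) ^ 2 ∂μ
        = ∫ ω, (εY ω - β ⬝ᵥ (fun i => b i * εY ω + atil i + εX i ω) - β0) ^ 2 ∂μ) := by
  have h1 := key13 μ S b σ εY εX hY1 hY2 hX1 hX2 hYX hmY hvY hmX hcX hYXc β β0 a1
  have h2 := key13 μ S b σ εY εX hY1 hY2 hX1 hX2 hYX hmY hvY hmX hcX hYXc β β0 atil
  refine ⟨h1, h2, fun hm => ?_⟩
  have : β ⬝ᵥ a1 = β ⬝ᵥ atil := by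
    have := dotProduct_sub β a1 atil
    rw [hm] at this; linarith
  rw [h1, h2, this]
end

section
/- Let Σ be a symmetric positive definite d×d matrix, b ∈ ℝ^d, σ > 0, and a₁, ã ∈ ℝ^d. In the anticausal model Y = ε_Y, X = bY + a + ε_X (with a = a₁ for source and a = ã for target, Var(ε_Y) = σ², Cov(ε_X) = Σ, uncorrelated noises), the source-optimal linear predictor (β*, β₀*) = argmin over (β, β₀) of the source risk satisfies β* = σ²Σ⁻¹b/(1 + σ²bᵀΣ⁻¹b), and its target population risk equals σ²/(1 + σ²bᵀΣ⁻¹b) + (σ²·bᵀΣ⁻¹(a₁ − ã))² / (1 + σ²bᵀΣ⁻¹b)². -/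
open Matrix MeasureTheory

lemma risk_eq {Ω : Type*} [MeasurableSpace Ω] (μ : Measure Ω) [IsProbabilityMeasure μ]
    {d : ℕ} (S : Matrix (Fin d) (Fin d) ℝ)
    (b a : Fin d → ℝ) (σ : ℝ)
    (εY : Ω → ℝ) (εX : Fin d → Ω → ℝ)
    (hY1 : Integrable εY μ) (hY2 : Integrable (fun ω => εY ω ^ 2) μ)
    (hX1 : ∀ i, Integrable (εX i) μ)
    (hX2 : ∀ i j, Integrable (fun ω => εX i ω * εX j ω) μ)
    (hYX : ∀ i, Integrable (fun ω => εY ω * εX i ω) μ)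
    (hmY : ∫ ω, εY ω ∂μ = 0) (hvY : ∫ ω, εY ω ^ 2 ∂μ = σ ^ 2)
    (hmX : ∀ i, ∫ ω, εX i ω ∂μ = 0)
    (hcX : ∀ i j, ∫ ω, εX i ω * εX j ω ∂μ = S i j)
    (hYXc : ∀ i, ∫ ω, εY ω * εX i ω ∂μ = 0)
    (β : Fin d → ℝ) (β0 : ℝ) :
    ∫ ω, (εY ω - β ⬝ᵥ (fun i => b i * εY ω + a i + εX i ω) - β0) ^ 2 ∂μ
      = (1 - β ⬝ᵥ b) ^ 2 * σ ^ 2 + β ⬝ᵥ S *ᵥ β + (β ⬝ᵥ a + β0) ^ 2 := by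
  set c : ℝ := 1 - β ⬝ᵥ b with hc
  set m : ℝ := β ⬝ᵥ a + β0 with hm
  set q : Ω → ℝ := fun ω => ∑ i, β i * εX i ω with hq
  -- integrability of pieces
  have hq1 : Integrable q μ := integrable_finset_sum _ fun i _ => (hX1 i).const_mul (β i)
  have hq1v : ∫ ω, q ω ∂μ = 0 := by
    rw [hq, integral_finset_sum _ fun i _ => (hX1 i).const_mul (β i)]
    simp [integral_const_mul, hmX]
  have hpqf : (fun ω => εY ω * q ω) = fun ω => ∑ i, β i * (εY ω * εX i ω) := by
    funext ω; rw [hq, Finset.mul_sum]; congr 1; funext i; ring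
  have hpq : Integrable (fun ω => εY ω * q ω) μ := by
    rw [hpqf]; exact integrable_finset_sum _ fun i _ => (hYX i).const_mul (β i)
  have hpqv : ∫ ω, εY ω * q ω ∂μ = 0 := by
    rw [hpqf, integral_finset_sum _ fun i _ => (hYX i).const_mul (β i)]
    simp [integral_const_mul, hYXc]
  have hq2f : (fun ω => q ω ^ 2) = fun ω => ∑ i, ∑ j, (β i * β j) * (εX i ω * εX j ω) := by
    funext ω
    rw [hq, sq, Finset.sum_mul_sum]
    refine Finset.sum_congr rfl fun i _ => Finset.sum_congr rfl fun j _ => by ring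
  have hq2 : Integrable (fun ω => q ω ^ 2) μ := by
    rw [hq2f]
    exact integrable_finset_sum _ fun i _ =>
      integrable_finset_sum _ fun j _ => (hX2 i j).const_mul _
  have hq2v : ∫ ω, q ω ^ 2 ∂μ = β ⬝ᵥ S *ᵥ β := by
    rw [hq2f, integral_finset_sum _ fun i _ =>
      integrable_finset_sum _ fun j _ => (hX2 i j).const_mul _]
    have : ∀ i, ∫ ω, ∑ j, (β i * β j) * (εX i ω * εX j ω) ∂μ
        = ∑ j, (β i * β j) * S i j := by
      intro i
      rw [integral_finset_sum _ fun j _ => (hX2 i j).const_mul _]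
      simp [integral_const_mul, hcX]
    simp only [this]
    simp only [dotProduct, Matrix.mulVec, dotProduct, Finset.mul_sum]
    refine Finset.sum_congr rfl fun i _ => Finset.sum_congr rfl fun j _ => by ring
  -- pointwise expansion
  have key : ∀ ω, (εY ω - β ⬝ᵥ (fun i => b i * εY ω + a i + εX i ω) - β0) ^ 2
      = c ^ 2 * εY ω ^ 2 + ((-(2 * c)) * (εY ω * q ω) + ((-(2 * c * m)) * εY ω
        + (q ω ^ 2 + ((2 * m) * q ω + m ^ 2)))) := by
    intro ω
    have hdot : β ⬝ᵥ (fun i => b i * εY ω + a i + εX i ω)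
        = (β ⬝ᵥ b) * εY ω + β ⬝ᵥ a + q ω := by
      simp only [dotProduct, hq, Finset.sum_mul]
      rw [← Finset.sum_add_distrib, ← Finset.sum_add_distrib]
      exact Finset.sum_congr rfl fun i _ => by ring
    rw [hdot, hc, hm]; ring
  rw [integral_congr_ae (Filter.Eventually.of_forall key)]
  have I1 : Integrable (fun ω => c ^ 2 * εY ω ^ 2) μ := hY2.const_mul _
  have I2 : Integrable (fun ω => (-(2 * c)) * (εY ω * q ω)) μ := hpq.const_mul _
  have I3 : Integrable (fun ω => (-(2 * c * m)) * εY ω) μ := hY1.const_mul _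
  have I4 : Integrable (fun ω => q ω ^ 2) μ := hq2
  have I5 : Integrable (fun ω => (2 * m) * q ω) μ := hq1.const_mul _
  have I6 : Integrable (fun _ : Ω => m ^ 2) μ := integrable_const _
  have I56 : Integrable (fun ω => (2 * m) * q ω + m ^ 2) μ := I5.add I6
  have I456 : Integrable (fun ω => q ω ^ 2 + ((2 * m) * q ω + m ^ 2)) μ := I4.add I56
  have I3456 : Integrable (fun ω => (-(2 * c * m)) * εY ω
      + (q ω ^ 2 + ((2 * m) * q ω + m ^ 2))) μ := I3.add I456
  have I23456 : Integrable (fun ω => (-(2 * c)) * (εY ω * q ω) + ((-(2 * c * m)) * εY ω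
      + (q ω ^ 2 + ((2 * m) * q ω + m ^ 2)))) μ := I2.add I3456
  rw [integral_add I1 I23456, integral_add I2 I3456, integral_add I3 I456,
    integral_add I4 I56, integral_add I5 I6]
  simp only [integral_const_mul, hvY, hpqv, hq1v, hq2v, integral_const, measure_univ,
    ENNReal.toReal_one, probReal_univ, smul_eq_mul, one_mul, hmY]
  ring
/-- The source-optimal linear predictor in the anticausal model
`Y = ε_Y`, `X = bY + a + ε_X` has coefficient `β* = σ²Σ⁻¹b/(1 + σ²bᵀΣ⁻¹b)`
and target population risk
`σ²/(1 + σ²bᵀΣ⁻¹b) + (σ²bᵀΣ⁻¹(a₁ − ã))²/(1 + σ²bᵀΣ⁻¹b)²`. -/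
theorem stmt14 {Ω : Type*} [MeasurableSpace Ω] (μ : Measure Ω) [IsProbabilityMeasure μ]
    {d : ℕ} (S : Matrix (Fin d) (Fin d) ℝ) (hS : S.PosDef) (hsymm : S.IsSymm)
    (b a1 atil : Fin d → ℝ) (σ : ℝ) (hσ : 0 < σ)
    (εY : Ω → ℝ) (εX : Fin d → Ω → ℝ)
    (hY1 : Integrable εY μ) (hY2 : Integrable (fun ω => εY ω ^ 2) μ)
    (hX1 : ∀ i, Integrable (εX i) μ)
    (hX2 : ∀ i j, Integrable (fun ω => εX i ω * εX j ω) μ)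
    (hYX : ∀ i, Integrable (fun ω => εY ω * εX i ω) μ)
    (hmY : ∫ ω, εY ω ∂μ = 0) (hvY : ∫ ω, εY ω ^ 2 ∂μ = σ ^ 2)
    (hmX : ∀ i, ∫ ω, εX i ω ∂μ = 0)
    (hcX : ∀ i j, ∫ ω, εX i ω * εX j ω ∂μ = S i j)
    (hYXc : ∀ i, ∫ ω, εY ω * εX i ω ∂μ = 0)
    (βs : Fin d → ℝ) (β0s : ℝ)
    (hmin : ∀ (β : Fin d → ℝ) (β0 : ℝ),
      ∫ ω, (εY ω - βs ⬝ᵥ (fun i => b i * εY ω + a1 i + εX i ω) - β0s) ^ 2 ∂μ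
        ≤ ∫ ω, (εY ω - β ⬝ᵥ (fun i => b i * εY ω + a1 i + εX i ω) - β0) ^ 2 ∂μ) :
    βs = (σ ^ 2 / (1 + σ ^ 2 * (b ⬝ᵥ S⁻¹.mulVec b))) • S⁻¹.mulVec b ∧
    ∫ ω, (εY ω - βs ⬝ᵥ (fun i => b i * εY ω + atil i + εX i ω) - β0s) ^ 2 ∂μ
      = σ ^ 2 / (1 + σ ^ 2 * (b ⬝ᵥ S⁻¹.mulVec b))
        + (σ ^ 2 * (b ⬝ᵥ S⁻¹.mulVec (a1 - atil))) ^ 2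
          / (1 + σ ^ 2 * (b ⬝ᵥ S⁻¹.mulVec b)) ^ 2 := by
  have risk := fun (a : Fin d → ℝ) (β : Fin d → ℝ) (β0 : ℝ) =>
    risk_eq μ S b a σ εY εX hY1 hY2 hX1 hX2 hYX hmY hvY hmX hcX hYXc β β0
  set w : Fin d → ℝ := S⁻¹.mulVec b with hw
  set k : ℝ := σ ^ 2 * (b ⬝ᵥ w) with hk
  -- basic facts
  have hu : IsUnit S.det := isUnit_iff_ne_zero.mpr (ne_of_gt hS.det_pos)
  have hSw : S *ᵥ w = b := by
    rw [hw, Matrix.mulVec_mulVec, Matrix.mul_nonsing_inv _ hu, Matrix.one_mulVec]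
  have hbw : 0 ≤ b ⬝ᵥ w := by simpa using hS.inv.posSemidef.dotProduct_mulVec_nonneg b
  have hkpos : 0 < 1 + k := by nlinarith [sq_nonneg σ, mul_nonneg (sq_nonneg σ) hbw]
  have hkne : (1 : ℝ) + k ≠ 0 := ne_of_gt hkpos
  have hsd : ∀ x y : Fin d → ℝ, x ⬝ᵥ S *ᵥ y = y ⬝ᵥ S *ᵥ x := by
    intro x y
    rw [Matrix.dotProduct_mulVec, ← Matrix.mulVec_transpose, hsymm.eq, dotProduct_comm]
  have hsymm_inv : (S⁻¹).IsSymm := by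
    rw [Matrix.IsSymm, Matrix.transpose_nonsing_inv, hsymm.eq]
  have hsdi : ∀ x y : Fin d → ℝ, x ⬝ᵥ S⁻¹ *ᵥ y = y ⬝ᵥ S⁻¹ *ᵥ x := by
    intro x y
    rw [Matrix.dotProduct_mulVec, ← Matrix.mulVec_transpose, hsymm_inv.eq, dotProduct_comm]
  set βt : Fin d → ℝ := (σ ^ 2 / (1 + k)) • w with hβt
  -- key quadratic decomposition
  have hβtb : βt ⬝ᵥ b = σ ^ 2 / (1 + k) * (b ⬝ᵥ w) := by
    rw [hβt, smul_dotProduct, smul_eq_mul, dotProduct_comm]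
  have hSβt : S *ᵥ βt = (σ ^ 2 / (1 + k)) • b := by
    rw [hβt, Matrix.mulVec_smul, hSw]
  have expand : ∀ β : Fin d → ℝ, (1 - β ⬝ᵥ b) ^ 2 * σ ^ 2 + β ⬝ᵥ S *ᵥ β
      = σ ^ 2 / (1 + k) + (σ ^ 2 * ((β - βt) ⬝ᵥ b) ^ 2 + (β - βt) ⬝ᵥ S *ᵥ (β - βt)) := by
    intro β
    have h1 : β ⬝ᵥ S *ᵥ βt = σ ^ 2 / (1 + k) * (β ⬝ᵥ b) := by
      rw [hSβt, dotProduct_smul, smul_eq_mul]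
    have h2 : βt ⬝ᵥ S *ᵥ β = σ ^ 2 / (1 + k) * (β ⬝ᵥ b) := by rw [hsd]; exact h1
    have h3 : βt ⬝ᵥ S *ᵥ βt = σ ^ 2 / (1 + k) * (σ ^ 2 / (1 + k) * (b ⬝ᵥ w)) := by
      rw [hSβt, dotProduct_smul, smul_eq_mul, hβtb]
    simp only [Matrix.mulVec_sub, sub_dotProduct, dotProduct_sub]
    rw [h1, h2, h3, hβtb]
    rw [hk]
    have h0 : 1 + σ ^ 2 * (b ⬝ᵥ w) ≠ 0 := hk ▸ hkne
    field_simp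
    ring
  -- minimality forces βs = βt and βs ⬝ᵥ a1 + β0s = 0
  have hineq : σ ^ 2 * ((βs - βt) ⬝ᵥ b) ^ 2 + (βs - βt) ⬝ᵥ S *ᵥ (βs - βt)
      + (βs ⬝ᵥ a1 + β0s) ^ 2 ≤ 0 := by
    have h := hmin βt (-(βt ⬝ᵥ a1))
    rw [risk a1 βs β0s, risk a1 βt (-(βt ⬝ᵥ a1)), expand βs, expand βt] at h
    simp only [sub_self, zero_dotProduct, Matrix.mulVec_zero, dotProduct_zero,
      add_neg_cancel, ne_eq, OfNat.ofNat_ne_zero, not_false_eq_true, zero_pow,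
      mul_zero, add_zero] at h
    linarith
  have hvb : 0 ≤ σ ^ 2 * ((βs - βt) ⬝ᵥ b) ^ 2 := by positivity
  have hvSv : 0 ≤ (βs - βt) ⬝ᵥ S *ᵥ (βs - βt) := by simpa using hS.posSemidef.dotProduct_mulVec_nonneg (βs - βt)
  have hm2 : 0 ≤ (βs ⬝ᵥ a1 + β0s) ^ 2 := sq_nonneg _
  have hv0 : βs - βt = 0 := by
    by_contra hne
    have hpos := hS.dotProduct_mulVec_pos hne
    simp only [star_trivial] at hpos
    linarith
  have hβs : βs = βt := sub_eq_zero.mp hv0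
  have hm0 : βs ⬝ᵥ a1 + β0s = 0 := by
    have h2 : (βs ⬝ᵥ a1 + β0s) ^ 2 = 0 := le_antisymm (by linarith) hm2
    exact pow_eq_zero_iff (by norm_num) |>.mp h2
  refine ⟨hβs, ?_⟩
  rw [risk atil βs β0s, expand βs, hβs, sub_self]
  simp only [zero_dotProduct, Matrix.mulVec_zero, dotProduct_zero, ne_eq,
    OfNat.ofNat_ne_zero, not_false_eq_true, zero_pow, mul_zero, add_zero]
  have hβ0 : β0s = -(βt ⬝ᵥ a1) := by rw [← hβs]; linarith
  have hkey : βt ⬝ᵥ atil + β0s = -(σ ^ 2 / (1 + k) * (b ⬝ᵥ S⁻¹ *ᵥ (a1 - atil))) := by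
    have hwd : w ⬝ᵥ (a1 - atil) = b ⬝ᵥ S⁻¹ *ᵥ (a1 - atil) := by
      rw [dotProduct_comm, hw, hsdi]
    rw [hβ0, hβt, smul_dotProduct, smul_dotProduct, smul_eq_mul, smul_eq_mul,
      ← hwd, dotProduct_sub]
    ring
  rw [hkey]
  have h0 : 1 + k ≠ 0 := hkne
  field_simp
end

section
/- Let Σ be a symmetric positive definite d×d matrix, b ∈ ℝ^d, σ > 0, Δ ≥ 0, and Q ∈ ℝ^{d×k} with linearly independent columns. Then the minimum over γ ∈ ℝ^d with γ in the column space of Q of (1 − γᵀb)²·(σ² + Δ) + γᵀΣγ equals (σ² + Δ) / (1 + (σ² + Δ)·bᵀQ(QᵀΣQ)⁻¹Qᵀb), attained at γ* = (σ² + Δ)·Q(QᵀΣQ)⁻¹Qᵀb / (1 + (σ² + Δ)·bᵀQ(QᵀΣQ)⁻¹Qᵀb). -/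
open Matrix

lemma dot_symm' {n : ℕ} {A : Matrix (Fin n) (Fin n) ℝ} (hA : Aᵀ = A)
    (x y : Fin n → ℝ) : x ⬝ᵥ A *ᵥ y = y ⬝ᵥ A *ᵥ x := by
  rw [dotProduct_mulVec, ← mulVec_transpose, hA, dotProduct_comm]

lemma QtSQ_posdef {d k : ℕ} (S : Matrix (Fin d) (Fin d) ℝ) (hS : S.PosDef)
    (hsymm : S.IsSymm) (Q : Matrix (Fin d) (Fin k) ℝ) (hQ : LinearIndependent ℝ Qᵀ) :
    (Qᵀ * S * Q).PosDef := by
  have hc : Qᴴ = Qᵀ := by ext i j; simp [conjTranspose_apply]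
  have hcS : Sᴴ = Sᵀ := by ext i j; simp [conjTranspose_apply]
  have hS1 : S.IsHermitian := by rw [Matrix.IsHermitian, hcS]; exact hsymm
  refine Matrix.PosDef.of_dotProduct_mulVec_pos ?_ ?_
  · rw [← hc]
    exact isHermitian_conjTranspose_mul_mul Q hS1
  · intro x hx
    have hinj : Function.Injective Q.mulVec := Matrix.mulVec_injective_iff.mpr hQ
    have hQx : Q *ᵥ x ≠ 0 := fun h => hx (hinj (h.trans (Matrix.mulVec_zero Q).symm))
    have := hS.dotProduct_mulVec_pos hQx
    simpa [star_trivial, ← Matrix.mulVec_mulVec, dotProduct_mulVec, vecMul_transpose] using this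

lemma quad_form' {d k : ℕ} (S : Matrix (Fin d) (Fin d) ℝ) (Q : Matrix (Fin d) (Fin k) ℝ)
    (x y : Fin k → ℝ) : (Q *ᵥ x) ⬝ᵥ S *ᵥ (Q *ᵥ y) = x ⬝ᵥ (Qᵀ * S * Q) *ᵥ y := by
  simp [← Matrix.mulVec_mulVec, dotProduct_mulVec, vecMul_transpose, Matrix.mul_assoc]

/-- CIP constrained quadratic program: minimum over the column space of `Q` of
`(1 − γᵀb)²(σ² + Δ) + γᵀΣγ`. -/
theorem stmt18 {d k : ℕ} (S : Matrix (Fin d) (Fin d) ℝ) (hS : S.PosDef)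
    (hsymm : S.IsSymm) (b : Fin d → ℝ) (σ Δ : ℝ) (hσ : 0 < σ) (hΔ : 0 ≤ Δ)
    (Q : Matrix (Fin d) (Fin k) ℝ) (hQ : LinearIndependent ℝ Qᵀ) :
    IsLeast
      {r : ℝ | ∃ γ : Fin d → ℝ, (∃ ζ : Fin k → ℝ, γ = Q.mulVec ζ) ∧
        r = (1 - γ ⬝ᵥ b) ^ 2 * (σ ^ 2 + Δ) + γ ⬝ᵥ S.mulVec γ}
      ((σ ^ 2 + Δ) /
        (1 + (σ ^ 2 + Δ) * (b ⬝ᵥ Q.mulVec ((Qᵀ * S * Q)⁻¹.mulVec (Qᵀ.mulVec b))))) ∧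
    (1 - (((σ ^ 2 + Δ) /
            (1 + (σ ^ 2 + Δ) * (b ⬝ᵥ Q.mulVec ((Qᵀ * S * Q)⁻¹.mulVec (Qᵀ.mulVec b))))) •
          Q.mulVec ((Qᵀ * S * Q)⁻¹.mulVec (Qᵀ.mulVec b))) ⬝ᵥ b) ^ 2 * (σ ^ 2 + Δ)
      + (((σ ^ 2 + Δ) /
            (1 + (σ ^ 2 + Δ) * (b ⬝ᵥ Q.mulVec ((Qᵀ * S * Q)⁻¹.mulVec (Qᵀ.mulVec b))))) •
          Q.mulVec ((Qᵀ * S * Q)⁻¹.mulVec (Qᵀ.mulVec b))) ⬝ᵥ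
        S.mulVec (((σ ^ 2 + Δ) /
            (1 + (σ ^ 2 + Δ) * (b ⬝ᵥ Q.mulVec ((Qᵀ * S * Q)⁻¹.mulVec (Qᵀ.mulVec b))))) •
          Q.mulVec ((Qᵀ * S * Q)⁻¹.mulVec (Qᵀ.mulVec b)))
      = (σ ^ 2 + Δ) /
          (1 + (σ ^ 2 + Δ) * (b ⬝ᵥ Q.mulVec ((Qᵀ * S * Q)⁻¹.mulVec (Qᵀ.mulVec b)))) := by
  
  have hT : (Qᵀ * S * Q).PosDef := QtSQ_posdef S hS hsymm Q hQ
  set s := σ ^ 2 + Δ with hs_def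
  have hs : 0 < s := by positivity
  set T := Qᵀ * S * Q with hT_def
  have hTt : Tᵀ = T := by
    rw [hT_def, Matrix.transpose_mul, Matrix.transpose_mul, transpose_transpose, hsymm.eq,
      Matrix.mul_assoc]
  have hTinv : T * T⁻¹ = 1 :=
    Matrix.mul_nonsing_inv T (isUnit_iff_ne_zero.mpr hT.det_pos.ne')
  set c := Qᵀ *ᵥ b with hc_def
  set u := T⁻¹ *ᵥ c with hu_def
  have hTu : T *ᵥ u = c := by
    rw [hu_def, Matrix.mulVec_mulVec, hTinv, Matrix.one_mulVec]
  set β := c ⬝ᵥ u with hb_def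
  have e3 : u ⬝ᵥ T *ᵥ u = β := by rw [hTu, dotProduct_comm]
  have hβ : 0 ≤ β := by
    have := hT.posSemidef.dotProduct_mulVec_nonneg u
    rw [star_trivial] at this
    rw [← e3]; exact_mod_cast this
  have hbQu : b ⬝ᵥ Q *ᵥ u = β := by
    rw [dotProduct_mulVec, ← mulVec_transpose]
  have hγb : ∀ ζ : Fin k → ℝ, (Q *ᵥ ζ) ⬝ᵥ b = ζ ⬝ᵥ c := by
    intro ζ
    rw [dotProduct_comm, dotProduct_mulVec, ← mulVec_transpose, dotProduct_comm]
  have hform : ∀ x y : Fin k → ℝ, (Q *ᵥ x) ⬝ᵥ S *ᵥ (Q *ᵥ y) = x ⬝ᵥ T *ᵥ y := by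
    intro x y; rw [quad_form', ← hT_def]
  rw [hbQu]
  clear_value β u c
  clear hu_def hc_def
  set D := 1 + s * β with hD_def
  have hD : 0 < D := add_pos_of_pos_of_nonneg one_pos (mul_nonneg hs.le hβ)
  set m := s / D with hm_def
  clear_value s T D m
  have hDne : (1 : ℝ) + s * β ≠ 0 := by rw [← hD_def]; exact hD.ne'
  have hstar : (1 - (m • (Q *ᵥ u)) ⬝ᵥ b) ^ 2 * s + (m • (Q *ᵥ u)) ⬝ᵥ S *ᵥ (m • (Q *ᵥ u)) = m := by
    rw [smul_dotProduct, Matrix.mulVec_smul, dotProduct_smul, smul_dotProduct, hγb u,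
      hform u u, e3, dotProduct_comm u c, ← hb_def]
    simp only [smul_eq_mul]
    rw [hm_def, hD_def]
    field_simp
    ring
  have hlb : ∀ r ∈ {r : ℝ | ∃ γ : Fin d → ℝ, (∃ ζ : Fin k → ℝ, γ = Q.mulVec ζ) ∧
      r = (1 - γ ⬝ᵥ b) ^ 2 * s + γ ⬝ᵥ S.mulVec γ}, m ≤ r := by
    rintro r ⟨γ, ⟨ζ, rfl⟩, rfl⟩
    rw [hγb ζ, hform ζ ζ]
    set t := ζ ⬝ᵥ c with ht_def
    set q := ζ ⬝ᵥ T *ᵥ ζ with hq_def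
    set w := ζ - (s / D) • u with hw_def
    have hW : 0 ≤ w ⬝ᵥ T *ᵥ w := by
      have := hT.posSemidef.dotProduct_mulVec_nonneg w
      rwa [star_trivial] at this
    have e1 : ζ ⬝ᵥ T *ᵥ u = t := by rw [hTu]
    have e2 : u ⬝ᵥ T *ᵥ ζ = t := by rw [dot_symm' hTt, hTu]
    have hWexp : w ⬝ᵥ T *ᵥ w = q - (s / D) * t - ((s / D) * t - (s / D) * ((s / D) * β)) := by
      simp only [hw_def, sub_dotProduct, Matrix.mulVec_sub, dotProduct_sub, Matrix.mulVec_smul,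
        dotProduct_smul, smul_dotProduct, smul_eq_mul, e1, e2, e3, ← hq_def]
      ring
    clear_value t q w
    have key : (1 - t) ^ 2 * s + q - m =
        (w ⬝ᵥ T *ᵥ w) + s * (t - (s / D) * β) ^ 2 := by
      rw [hWexp, hm_def, hD_def]
      field_simp
      ring
    nlinarith [hW, mul_nonneg hs.le (sq_nonneg (t - (s / D) * β))]
  exact ⟨⟨⟨m • (Q *ᵥ u), ⟨m • u, (Matrix.mulVec_smul Q m u).symm⟩, hstar.symm⟩, hlb⟩, hstar⟩
end
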